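/- arXiv:0706.4458 — 2 statements merged into one kernel-verified Lean document; each statement's English description precedes it below -/
import Mathlib

section
/- Let T be a triangulated category with arbitrary coproducts and α an infinite regular cardinal. If G → G' is a morphism between α-small objects of T, then its cone C is α-small. -/
open CategoryTheory Limits Pretriangulated

universe v u

/-- An object `G` of a category with coproducts is `α`-small if every morphism from `G`
to a set-indexed coproduct factors through a subcoproduct indexed by a subset of
cardinality strictly smaller than `α`. -/
def IsAlphaSmall {C : Type u} [Category.{v} C] [HasCoproducts.{v} C]
    (α : Cardinal.{v}) (G : C) : Prop :=
  ∀ (I : Type v) (X : I → C) (f : G ⟶ ∐ X),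
    ∃ (J : Set I) (g : G ⟶ ∐ (fun j : J => X j)),
      Cardinal.mk J < α ∧ g ≫ Sigma.desc (fun j : J => Sigma.ι X j.1) = f

section Aux

variable {C : Type u} [Category.{v} C] [HasCoproducts.{v} C]

/-- Inclusion of a subcoproduct indexed by `J' ⊆ J`. -/
noncomputable def subIncl {I : Type v} (X : I → C) {J' J : Set I} (h : J' ⊆ J) :
    (∐ fun j : J' => X j) ⟶ (∐ fun j : J => X j) :=
  Sigma.desc (fun j : J' => Sigma.ι (fun j : J => X j.1) ⟨j.1, h j.2⟩)

lemma subIncl_desc {I : Type v} (X : I → C) {J' J : Set I} (h : J' ⊆ J) :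
    subIncl X h ≫ Sigma.desc (fun j : J => Sigma.ι X j.1) =
      Sigma.desc (fun j : J' => Sigma.ι X j.1) := by
  ext j
  simp [subIncl]

lemma mono_descJ [Preadditive C] {I : Type v} (X : I → C) (J : Set I) :
    Mono (Sigma.desc (fun j : J => Sigma.ι X j.1)) := by
  classical
  have : IsSplitMono (Sigma.desc (fun j : J => Sigma.ι X j.1)) :=
    ⟨⟨{ retraction := Sigma.desc (fun i : I =>
          if h : i ∈ J then Sigma.ι (fun j : J => X j.1) ⟨i, h⟩ else 0)
        id := by
          ext j
          simp [dif_pos j.2] }⟩⟩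
  infer_instance

lemma isAlphaSmall_equiv {α : Cardinal.{v}} (e : C ≌ C) (G : C)
    (h : IsAlphaSmall α G) : IsAlphaSmall α (e.functor.obj G) := by
  intro I X f
  have hiso : IsIso (sigmaComparison e.inverse X) := inferInstance
  obtain ⟨J, g, hJ, hg⟩ := h I (fun i => e.inverse.obj (X i))
    (e.unit.app G ≫ e.inverse.map f ≫ inv (sigmaComparison e.inverse X))
  refine ⟨J, (e.toAdjunction.homEquiv G _).symm
    (g ≫ sigmaComparison e.inverse (fun j : J => X j.1)), hJ, ?_⟩
  apply (e.toAdjunction.homEquiv G _).injective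
  rw [Adjunction.homEquiv_naturality_right, Equiv.apply_symm_apply]
  have sq : sigmaComparison e.inverse (fun j : J => X j.1) ≫
      e.inverse.map (Sigma.desc (fun j : J => Sigma.ι X j.1)) =
      Sigma.desc (fun j : J => Sigma.ι (fun i => e.inverse.obj (X i)) j.1) ≫
        sigmaComparison e.inverse X := by
    ext j
    simp [← e.inverse.map_comp]
  rw [Category.assoc, sq, ← Category.assoc, hg]
  simp [Adjunction.homEquiv_unit]

end Aux

/-- In a triangulated category with arbitrary coproducts, the cone of a morphism between
`α`-small objects is `α`-small, for `α` an infinite regular cardinal: in any distinguished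
triangle `G ⟶ G' ⟶ C ⟶ ΣG` with `G`, `G'` `α`-small, the object `C` is `α`-small. -/
theorem isAlphaSmall_cone {C : Type u} [Category.{v} C] [HasCoproducts.{v} C]
    [Preadditive C] [HasZeroObject C] [HasShift C ℤ]
    [∀ n : ℤ, (shiftFunctor C n).Additive] [Pretriangulated C]
    (α : Cardinal.{v}) (hα : α.IsRegular) (hα' : Cardinal.aleph0 ≤ α)
    (T : Triangle C) (hT : T ∈ distTriang C)
    (h₁ : IsAlphaSmall α T.obj₁) (h₂ : IsAlphaSmall α T.obj₂) :
    IsAlphaSmall α T.obj₃ := by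
  intro I X f
  -- factor T.mor₂ ≫ f through a small subcoproduct
  obtain ⟨J₁, g, hJ₁, hg⟩ := h₂ I X (T.mor₂ ≫ f)
  -- T.mor₁ ≫ g = 0
  have hm : Mono (Sigma.desc (fun j : J₁ => Sigma.ι X j.1)) := mono_descJ X J₁
  have hz : T.mor₁ ≫ g = 0 := by
    rw [← cancel_mono (Sigma.desc (fun j : J₁ => Sigma.ι X j.1)), Category.assoc, hg,
      zero_comp, ← Category.assoc, comp_distTriang_mor_zero₁₂ T hT, zero_comp]
  -- lift g through T.mor₂
  obtain ⟨h, hh⟩ := Triangle.yoneda_exact₂ T hT g hz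
  -- the difference factors through T.mor₃
  have hz2 : T.mor₂ ≫ (f - h ≫ Sigma.desc (fun j : J₁ => Sigma.ι X j.1)) = 0 := by
    simp only [Preadditive.comp_sub, ← Category.assoc, ← hh, hg, sub_self]
  obtain ⟨k, hk⟩ := Triangle.yoneda_exact₃ T hT _ hz2
  -- T.obj₁⟦1⟧ is α-small
  have hsh : IsAlphaSmall α (T.obj₁⟦(1 : ℤ)⟧) :=
    isAlphaSmall_equiv (shiftEquiv C (1 : ℤ)) T.obj₁ h₁
  obtain ⟨J₂, k', hJ₂, hk'⟩ := hsh I X k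
  refine ⟨J₁ ∪ J₂,
    h ≫ subIncl X Set.subset_union_left + T.mor₃ ≫ k' ≫ subIncl X Set.subset_union_right,
    ?_, ?_⟩
  · refine lt_of_le_of_lt (Cardinal.mk_union_le J₁ J₂) ?_
    exact Cardinal.add_lt_of_lt hα' hJ₁ hJ₂
  · simp only [Preadditive.add_comp, Category.assoc, subIncl_desc, hk']
    rw [← hk]
    abel
end

section
/- Let T be a triangulated category with arbitrary coproducts, G a small full subcategory, and Add(G) its closure under arbitrary coproducts and direct factors. Then for each object X of T, the restricted functor T(−,X)|_{Add(G)} is a coherent functor on Add(G), i.e. it admits a presentation by representable functors. -/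
open CategoryTheory Limits Pretriangulated

universe v u

variable {C : Type u} [Category.{v} C]

/-- `Add 𝒢₀`: the closure of a class of objects under arbitrary set-indexed coproducts and
direct factors. -/
inductive AddClosure [HasCoproducts.{v} C] (S : Set C) : C → Prop
  | base (X : C) : X ∈ S → AddClosure S X
  | coprod (I : Type v) (X : I → C) : (∀ i, AddClosure S (X i)) → AddClosure S (∐ X)
  | retract (X Y : C) (p : X ⟶ Y) (i : Y ⟶ X) : i ≫ p = 𝟙 Y →
      AddClosure S X → AddClosure S Y

/-- The restriction of the additive Hom functor `Hom(−,X)` to the full subcategory of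
objects in `P`. -/
def restrictedHom [Preadditive C] (P : Set C) (X : C) :
    (ObjectProperty.FullSubcategory (· ∈ P))ᵒᵖ ⥤ AddCommGrpCat.{v} :=
  (ObjectProperty.ι (· ∈ P)).op ⋙ preadditiveYoneda.obj X

/-- A functor `F` on the full subcategory of objects of `P` is coherent if it admits a
presentation `Hom(−,G₁) ⟶ Hom(−,G₀) ⟶ F ⟶ 0` by representable functors with `G₁, G₀ ∈ P`,
i.e. an exact sequence of functors to abelian groups. -/
def IsCoherent [Preadditive C] (P : Set C)
    (F : (ObjectProperty.FullSubcategory (· ∈ P))ᵒᵖ ⥤ AddCommGrpCat.{v}) : Prop :=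
  ∃ (G₁ G₀ : ObjectProperty.FullSubcategory (· ∈ P))
    (p : restrictedHom P G₁.obj ⟶ restrictedHom P G₀.obj)
    (q : restrictedHom P G₀.obj ⟶ F),
    (∀ A, Function.Surjective (q.app A)) ∧
    (∀ A (y : (restrictedHom P G₀.obj).obj A), q.app A y = 0 ↔ ∃ x, p.app A x = y)

/-- For any object `X`, there is an object `G` of the additive closure of `𝒢₀` and a
morphism `π : G ⟶ X` through which every morphism from an object of the additive closure
to `X` factors. -/
lemma exists_addClosure_cover [HasCoproducts.{v} C] [Preadditive C]
    (𝒢₀ : Set C) (hsmall : Small.{v} 𝒢₀) (X : C) :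
    ∃ (G : C) (_ : AddClosure 𝒢₀ G) (π : G ⟶ X),
      ∀ (A : C), AddClosure 𝒢₀ A → ∀ f : A ⟶ X, ∃ g : A ⟶ G, g ≫ π = f := by
  haveI := hsmall
  let D : (Σ g : Shrink.{v} 𝒢₀, ((((equivShrink 𝒢₀).symm g : 𝒢₀) : C) ⟶ X)) → C :=
    fun i => (((equivShrink 𝒢₀).symm i.1 : 𝒢₀) : C)
  refine ⟨∐ D, AddClosure.coprod _ _ (fun i => AddClosure.base _
    ((equivShrink 𝒢₀).symm i.1).2), Sigma.desc (fun i => i.2), ?_⟩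
  intro A hA
  induction hA with
  | base A hA =>
    intro f
    have he : D ⟨equivShrink 𝒢₀ ⟨A, hA⟩, eqToHom (by simp [D]) ≫ f⟩ = A := by simp [D]
    exact ⟨eqToHom he.symm ≫ Sigma.ι D ⟨equivShrink 𝒢₀ ⟨A, hA⟩, eqToHom (by simp [D]) ≫ f⟩,
      by simp⟩
  | coprod I Y h ih =>
    intro f
    choose g hg using fun i => ih i (Sigma.ι Y i ≫ f)
    exact ⟨Sigma.desc g, by ext i; simp [hg i]⟩
  | retract B A p i hip hB ih =>
    intro f
    obtain ⟨g, hg⟩ := ih (p ≫ f)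
    exact ⟨i ≫ g, by rw [Category.assoc, hg, ← Category.assoc, hip, Category.id_comp]⟩

/-- For every object `X` of a triangulated category `T` with arbitrary coproducts and every
small full subcategory `𝒢₀`, the restriction of `Hom(−,X)` to `Add 𝒢₀` is a coherent
functor. -/
theorem restrictedHom_isCoherent [HasCoproducts.{v} C]
    [Preadditive C] [HasZeroObject C] [HasShift C ℤ]
    [∀ n : ℤ, (shiftFunctor C n).Additive] [Pretriangulated C]
    (𝒢₀ : Set C) (hsmall : Small.{v} 𝒢₀) (X : C) :
    IsCoherent (setOf (AddClosure 𝒢₀)) (restrictedHom (setOf (AddClosure 𝒢₀)) X) := by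
  obtain ⟨G0, hG0, π0, hcov0⟩ := exists_addClosure_cover 𝒢₀ hsmall X
  obtain ⟨Y, w, h, hT⟩ := distinguished_cocone_triangle₁ π0
  obtain ⟨G1, hG1, π1, hcov1⟩ := exists_addClosure_cover 𝒢₀ hsmall Y
  refine ⟨⟨G1, hG1⟩, ⟨G0, hG0⟩,
    Functor.whiskerLeft (ObjectProperty.ι (· ∈ setOf (AddClosure 𝒢₀))).op
      (preadditiveYoneda.map (π1 ≫ w)),
    Functor.whiskerLeft (ObjectProperty.ι (· ∈ setOf (AddClosure 𝒢₀))).op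
      (preadditiveYoneda.map π0), ?_, ?_⟩
  · intro A f
    obtain ⟨g, hg⟩ := hcov0 A.unop.obj A.unop.2 f
    exact ⟨g, hg⟩
  · intro A y
    constructor
    · intro hy
      obtain ⟨g, hg⟩ := Triangle.coyoneda_exact₂ _ hT y hy
      obtain ⟨x, hx⟩ := hcov1 A.unop.obj A.unop.2 g
      refine ⟨x, ?_⟩
      show x ≫ π1 ≫ w = y
      rw [← Category.assoc, hx]; exact hg.symm
    · rintro ⟨x, rfl⟩
      show (x ≫ π1 ≫ w) ≫ π0 = 0
      have : w ≫ π0 = 0 := comp_distTriang_mor_zero₁₂ _ hT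
      have key : ∀ {Z : C} (x : Z ⟶ G1), (x ≫ π1 ≫ w) ≫ π0 = 0 := by
        intro Z x
        rw [Category.assoc, Category.assoc, this, Limits.comp_zero, Limits.comp_zero]
      exact key x
end
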